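/- Let f : ℝⁿ → ℝ be differentiable with coordinate-wise L-Lipschitz continuous gradient and μ₁-strongly convex with respect to the 1-norm (μ₁ > 0), with minimizer x*. Suppose the coordinate i_k satisfies the multiplicative-error approximate Gauss-Southwell condition |∇_{i_k}f(x^k)| ≥ (1 − ε_k)‖∇f(x^k)‖∞ for some ε_k ∈ [0, 1), and x^{k+1} = x^k − (1/L)∇_{i_k}f(x^k)e_{i_k}. Then f(x^{k+1}) − f(x*) ≤ (1 − μ₁(1 − ε_k)²/L)(f(x^k) − f(x*)). -/

import Mathlib

open scoped RealInnerProductSpace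

private lemma coord_descent_aux {n : ℕ}
    (f : EuclideanSpace ℝ (Fin n) → ℝ)
    (f' : EuclideanSpace ℝ (Fin n) → EuclideanSpace ℝ (Fin n))
    (hf : ∀ x, HasGradientAt f (f' x) x)
    (L : ℝ) (hL : 0 < L)
    (hlip : ∀ (x : EuclideanSpace ℝ (Fin n)) (α : ℝ) (i : Fin n),
      |f' (x + α • EuclideanSpace.single i 1) i - f' x i| ≤ L * |α|)
    (xk : EuclideanSpace ℝ (Fin n)) (ik : Fin n) :
    f (xk - ((1 / L) * f' xk ik) • EuclideanSpace.single ik 1)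
      ≤ f xk - (f' xk ik) ^ 2 / (2 * L) := by
  set g : ℝ := f' xk ik with hg
  set v : EuclideanSpace ℝ (Fin n) := EuclideanSpace.single ik 1 with hv
  set φ : ℝ → ℝ := fun t => f (xk + t • v) with hφ
  set D : ℝ → ℝ := fun t => f' (xk + t • v) ik with hD
  have hderiv : ∀ t : ℝ, HasDerivAt φ (D t) t := by
    intro t
    have hline : HasDerivAt (fun t : ℝ => xk + t • v) v t := by
      simpa using ((hasDerivAt_id t).smul_const v).const_add xk
    have hfd := (hf (xk + t • v)).hasFDerivAt.comp_hasDerivAt t hline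
    have : (InnerProductSpace.toDual ℝ _ (f' (xk + t • v))) v = D t := by
      simp [InnerProductSpace.toDual_apply_apply, hv, hD, EuclideanSpace.inner_single_right]
    rwa [this] at hfd
  have hD0 : D 0 = g := by simp [hD, hg]
  have hDlip : ∀ t : ℝ, |D t - D 0| ≤ L * |t| := by
    intro t
    have := hlip xk t ik
    simpa [hD, hg] using this
  have hdescent : ∀ s : ℝ, φ s ≤ φ 0 + g * s + L / 2 * s ^ 2 := by
    intro s
    set χ : ℝ → ℝ := fun t => φ t - g * t - L / 2 * t ^ 2 with hχ
    have hχderiv : ∀ t : ℝ, HasDerivAt χ (D t - g - L * t) t := by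
      intro t
      have h1 := ((hderiv t).sub ((hasDerivAt_id t).const_mul g)).sub
        (((hasDerivAt_pow 2 t)).const_mul (L / 2))
      convert h1 using 1
      exacts [rfl, rfl, rfl, by ring]
    have hdiff : ∀ t : ℝ, DifferentiableAt ℝ χ t := fun t => (hχderiv t).differentiableAt
    have hcont : Continuous χ := by
      have : Differentiable ℝ χ := hdiff
      exact this.continuous
    have key : χ s ≤ χ 0 := by
      rcases le_or_gt 0 s with hs | hs
      · have hanti : AntitoneOn χ (Set.Ici 0) := by
          apply antitoneOn_of_deriv_nonpos (convex_Ici 0) hcont.continuousOn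
            (fun t _ => (hdiff t).differentiableWithinAt)
          intro t ht
          rw [interior_Ici] at ht
          rw [(hχderiv t).deriv]
          have h1 := hDlip t
          rw [hD0] at h1
          have : |t| = t := abs_of_pos ht
          rw [this] at h1
          have := abs_le.mp h1
          linarith [this.2]
        exact hanti (Set.self_mem_Ici) hs hs
      · have hmono : MonotoneOn χ (Set.Iic 0) := by
          apply monotoneOn_of_deriv_nonneg (convex_Iic 0) hcont.continuousOn
            (fun t _ => (hdiff t).differentiableWithinAt)
          intro t ht
          rw [interior_Iic] at ht
          rw [(hχderiv t).deriv]
          have h1 := hDlip t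
          rw [hD0] at h1
          have : |t| = -t := abs_of_neg ht
          rw [this] at h1
          have := abs_le.mp h1
          linarith [this.1]
        exact hmono (le_of_lt hs) (Set.self_mem_Iic) (le_of_lt hs)
    simp only [hχ] at key
    nlinarith [key]
  have h1 := hdescent (-(g / L))
  have hφ0 : φ 0 = f xk := by simp [hφ]
  have hφs : φ (-(g / L)) = f (xk - ((1 / L) * g) • v) := by
    simp only [hφ]
    congr 1
    rw [sub_eq_add_neg, ← neg_smul]
    congr 1
    field_simp
  rw [hφs, hφ0] at h1
  have hL' : L ≠ 0 := ne_of_gt hL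
  calc f (xk - ((1 / L) * g) • v)
      ≤ f xk + g * (-(g / L)) + L / 2 * (-(g / L)) ^ 2 := h1
    _ = f xk - g ^ 2 / (2 * L) := by field_simp; ring

private lemma sc_bound_aux {n : ℕ} [Nonempty (Fin n)]
    (f : EuclideanSpace ℝ (Fin n) → ℝ)
    (f' : EuclideanSpace ℝ (Fin n) → EuclideanSpace ℝ (Fin n))
    (μ₁ : ℝ) (hμ₁ : 0 < μ₁)
    (hsc : ∀ x y, f y ≥ f x + ⟪f' x, y - x⟫ + μ₁ / 2 * (∑ i, |y i - x i|) ^ 2)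
    (xs : EuclideanSpace ℝ (Fin n))
    (xk : EuclideanSpace ℝ (Fin n)) :
    f xk - f xs ≤ (⨆ j, |f' xk j|) ^ 2 / (2 * μ₁) := by
  set M : ℝ := ⨆ j, |f' xk j| with hM
  have hbdd : BddAbove (Set.range fun j => |f' xk j|) := Set.finite_range _ |>.bddAbove
  have hMge : ∀ j, |f' xk j| ≤ M := fun j => le_ciSup hbdd j
  have hM0 : 0 ≤ M := le_trans (abs_nonneg _) (hMge (Classical.arbitrary _))
  have h1 := hsc xk xs
  set S : ℝ := ∑ i, |xs i - xk i| with hS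
  have hS0 : 0 ≤ S := Finset.sum_nonneg fun i _ => abs_nonneg _
  have hinner : ⟪f' xk, xs - xk⟫ ≥ -(M * S) := by
    have habs : |⟪f' xk, xs - xk⟫| ≤ M * S := by
      have : ⟪f' xk, xs - xk⟫ = ∑ i, f' xk i * (xs i - xk i) := by
        simp [PiLp.inner_apply, RCLike.inner_apply, mul_comm]
      rw [this]
      calc |∑ i, f' xk i * (xs i - xk i)| ≤ ∑ i, |f' xk i * (xs i - xk i)| :=
            Finset.abs_sum_le_sum_abs _ _
        _ ≤ ∑ i, M * |xs i - xk i| := by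
            apply Finset.sum_le_sum
            intro i _
            rw [abs_mul]
            exact mul_le_mul_of_nonneg_right (hMge i) (abs_nonneg _)
        _ = M * S := by rw [← Finset.mul_sum]
    linarith [abs_le.mp habs |>.1]
  have hpi : (∀ i : Fin n, (xs - xk) i = xs i - xk i) := fun i => rfl
  have h2 : f xs ≥ f xk - M * S + μ₁ / 2 * S ^ 2 := by
    linarith [hinner]
  have h2μ : (0:ℝ) < 2 * μ₁ := by linarith
  rw [le_div_iff₀ h2μ]
  have h3 : f xk - f xs ≤ M * S - μ₁ / 2 * S ^ 2 := by linarith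
  nlinarith [sq_nonneg (M - μ₁ * S), mul_le_mul_of_nonneg_right h3 h2μ.le]

/-- convergence rate of the approximate Gauss-Southwell rule with
multiplicative error `ε_k`. -/
theorem approx_gauss_southwell_multiplicative {n : ℕ}
    (f : EuclideanSpace ℝ (Fin n) → ℝ)
    (f' : EuclideanSpace ℝ (Fin n) → EuclideanSpace ℝ (Fin n))
    (hf : ∀ x, HasGradientAt f (f' x) x)
    (L : ℝ) (hL : 0 < L)
    (hlip : ∀ (x : EuclideanSpace ℝ (Fin n)) (α : ℝ) (i : Fin n),
      |f' (x + α • EuclideanSpace.single i 1) i - f' x i| ≤ L * |α|)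
    (μ₁ : ℝ) (hμ₁ : 0 < μ₁)
    (hsc : ∀ x y, f y ≥ f x + ⟪f' x, y - x⟫ + μ₁ / 2 * (∑ i, |y i - x i|) ^ 2)
    (xs : EuclideanSpace ℝ (Fin n)) (hxs : ∀ y, f xs ≤ f y)
    (ε : ℝ) (hε0 : 0 ≤ ε) (hε1 : ε < 1)
    (xk : EuclideanSpace ℝ (Fin n)) (ik : Fin n)
    (hik : |f' xk ik| ≥ (1 - ε) * ⨆ j, |f' xk j|)
    (xk1 : EuclideanSpace ℝ (Fin n))
    (hstep : xk1 = xk - ((1 / L) * f' xk ik) • EuclideanSpace.single ik 1) :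
    f xk1 - f xs ≤ (1 - μ₁ * (1 - ε) ^ 2 / L) * (f xk - f xs) := by
  have : Nonempty (Fin n) := ⟨ik⟩
  set g : ℝ := f' xk ik with hg
  set M : ℝ := ⨆ j, |f' xk j| with hM
  have hbdd : BddAbove (Set.range fun j => |f' xk j|) := Set.finite_range _ |>.bddAbove
  have hMge : ∀ j, |f' xk j| ≤ M := fun j => le_ciSup hbdd j
  have hM0 : 0 ≤ M := le_trans (abs_nonneg _) (hMge ik)
  have hxk1 : f xk1 ≤ f xk - g ^ 2 / (2 * L) := by
    rw [hstep]
    exact coord_descent_aux f f' hf L hL hlip xk ik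
  have hscb : f xk - f xs ≤ M ^ 2 / (2 * μ₁) :=
    sc_bound_aux f f' μ₁ hμ₁ hsc xs xk
  have hfxk : 0 ≤ f xk - f xs := by linarith [hxs xk]
  have hgM : g ^ 2 ≥ (1 - ε) ^ 2 * M ^ 2 := by
    have h1 : (1 - ε) * M ≤ |g| := hik
    have h2 : 0 ≤ (1 - ε) * M := mul_nonneg (by linarith) hM0
    nlinarith [sq_abs g]
  have hM2 : M ^ 2 ≥ 2 * μ₁ * (f xk - f xs) := by
    have h2μ : (0:ℝ) < 2 * μ₁ := by linarith
    have h4 : (f xk - f xs) * (2 * μ₁) ≤ M ^ 2 := (le_div_iff₀ h2μ).mp hscb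
    calc 2 * μ₁ * (f xk - f xs) = (f xk - f xs) * (2 * μ₁) := by ring
      _ ≤ M ^ 2 := h4
  have hg2 : g ^ 2 ≥ 2 * μ₁ * (1 - ε) ^ 2 * (f xk - f xs) := by
    have h1 : (1 - ε) ^ 2 * M ^ 2 ≥ (1 - ε) ^ 2 * (2 * μ₁ * (f xk - f xs)) :=
      mul_le_mul_of_nonneg_left hM2 (sq_nonneg _)
    calc 2 * μ₁ * (1 - ε) ^ 2 * (f xk - f xs)
        = (1 - ε) ^ 2 * (2 * μ₁ * (f xk - f xs)) := by ring
      _ ≤ (1 - ε) ^ 2 * M ^ 2 := h1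
      _ ≤ g ^ 2 := hgM
  have hdiv : μ₁ * (1 - ε) ^ 2 / L * (f xk - f xs) ≤ g ^ 2 / (2 * L) := by
    rw [div_mul_eq_mul_div, div_le_div_iff₀ hL (by linarith)]
    have h5 : 2 * μ₁ * (1 - ε) ^ 2 * (f xk - f xs) * L ≤ g ^ 2 * L :=
      mul_le_mul_of_nonneg_right hg2 hL.le
    calc μ₁ * (1 - ε) ^ 2 * (f xk - f xs) * (2 * L)
        = 2 * μ₁ * (1 - ε) ^ 2 * (f xk - f xs) * L := by ring
      _ ≤ g ^ 2 * L := h5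
  rw [sub_mul, one_mul]
  linarith [hxk1, hdiv]
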